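/- arXiv:2406.13969 — 3 statements merged into one kernel-verified Lean document; each statement's English description precedes it below -/
import Mathlib

section
/- Let L ≥ 2 and let O = {(p_t, y_t)}_{t=1}^T be a dataset. Then O satisfies WARP if and only if there exists a preference function r : ℝ^L_+ × ℝ^L_+ → ℝ that is continuous, strictly increasing, skew-symmetric, and strictly piecewise concave, and that strictly rationalizes O. -/
open scoped BigOperators

noncomputable section

/-- Dot product of two vectors in `ℝ^L`. -/
def dotp {L : ℕ} (p y : Fin L → ℝ) : ℝ := ∑ i, p i * y i

/-- Membership in the nonnegative orthant `ℝ^L_+`. -/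
def Nonneg {L : ℕ} (x : Fin L → ℝ) : Prop := ∀ i, 0 ≤ x i

/-- The dataset `{(p_t, y_t)}` satisfies the Weak Axiom of Revealed Preference. -/
def WARP {L T : ℕ} (p y : Fin T → Fin L → ℝ) : Prop :=
  ¬ ∃ s t : Fin T, y t ≠ y s ∧ dotp (p t) (y t) ≥ dotp (p t) (y s) ∧
      dotp (p s) (y s) ≥ dotp (p s) (y t)

/-- `r` is skew-symmetric on the nonnegative orthant. -/
def SkewSymmetric {L : ℕ} (r : (Fin L → ℝ) → (Fin L → ℝ) → ℝ) : Prop :=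
  ∀ x y : Fin L → ℝ, Nonneg x → Nonneg y → r x y = - r y x

/-- `r` is continuous on `X × X` where `X = ℝ^L_+`. -/
def ContinuousOnOrthant {L : ℕ} (r : (Fin L → ℝ) → (Fin L → ℝ) → ℝ) : Prop :=
  ContinuousOn (fun q : (Fin L → ℝ) × (Fin L → ℝ) => r q.1 q.2)
    {q : (Fin L → ℝ) × (Fin L → ℝ) | Nonneg q.1 ∧ Nonneg q.2}

/-- `r` is strictly increasing in its first argument on the nonnegative orthant. -/
def StrictlyIncreasingFirst {L : ℕ} (r : (Fin L → ℝ) → (Fin L → ℝ) → ℝ) : Prop :=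
  ∀ x z y : Fin L → ℝ, Nonneg x → Nonneg z → Nonneg y →
    (∀ i, z i < x i) → r z y < r x y

/-- `r` is strictly piecewise concave: it is the pointwise maximum, over a compact
family indexed by `K`, of a jointly continuous family of functions each of which is
strictly concave in the first argument. -/
def StrictPiecewiseConcave {L : ℕ} (r : (Fin L → ℝ) → (Fin L → ℝ) → ℝ) : Prop :=
  ∃ (K : Type) (_ : TopologicalSpace K) (_ : CompactSpace K) (_ : Nonempty K)
    (f : K → (Fin L → ℝ) → (Fin L → ℝ) → ℝ),
    ContinuousOn (fun q : K × (Fin L → ℝ) × (Fin L → ℝ) => f q.1 q.2.1 q.2.2)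
      {q : K × (Fin L → ℝ) × (Fin L → ℝ) | Nonneg q.2.1 ∧ Nonneg q.2.2} ∧
    (∀ (k : K) (y : Fin L → ℝ), Nonneg y →
      StrictConcaveOn ℝ {x : Fin L → ℝ | Nonneg x} (fun x => f k x y)) ∧
    (∀ x y : Fin L → ℝ, Nonneg x → Nonneg y →
      IsGreatest (Set.range fun k => f k x y) (r x y))

/-- `r` strictly rationalizes the dataset `{(p_t, y_t)}`. -/
def StrictlyRationalizes {L T : ℕ} (p y : Fin T → Fin L → ℝ)
    (r : (Fin L → ℝ) → (Fin L → ℝ) → ℝ) : Prop :=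
  ∀ (t : Fin T) (z : Fin L → ℝ), Nonneg z →
    dotp (p t) (y t) ≥ dotp (p t) z → z ≠ y t → 0 < r (y t) z

namespace WarpAux

variable {L T : ℕ}

lemma dotp_nonneg {q x : Fin L → ℝ} (hq : ∀ i, 0 ≤ q i) (hx : ∀ i, 0 ≤ x i) :
    0 ≤ dotp q x :=
  Finset.sum_nonneg fun i _ => mul_nonneg (hq i) (hx i)

lemma dotp_smul (c : ℝ) (q x : Fin L → ℝ) : dotp (c • q) x = c * dotp q x := by
  simp [dotp, Finset.mul_sum, mul_assoc]

lemma dotp_lin (q x z : Fin L → ℝ) (a b : ℝ) :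
    dotp q (a • x + b • z) = a * dotp q x + b * dotp q z := by
  simp only [dotp, Pi.add_apply, Pi.smul_apply, smul_eq_mul, Finset.mul_sum,
    ← Finset.sum_add_distrib]
  exact Finset.sum_congr rfl fun i _ => by ring

lemma dotp_mono {q x z : Fin L → ℝ} (hq : ∀ i, 0 ≤ q i) (h : ∀ i, x i ≤ z i) :
    dotp q x ≤ dotp q z :=
  Finset.sum_le_sum fun i _ => mul_le_mul_of_nonneg_left (h i) (hq i)

lemma dotp_lt {q x z : Fin L → ℝ} (hL : 0 < L) (hq : ∀ i, 0 < q i) (h : ∀ i, x i < z i) :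
    dotp q x < dotp q z := by
  have : Nonempty (Fin L) := ⟨⟨0, hL⟩⟩
  exact Finset.sum_lt_sum_of_nonempty Finset.univ_nonempty fun i _ =>
    mul_lt_mul_of_pos_left (h i) (hq i)

lemma eq_zero_of_dotp {q x : Fin L → ℝ} (hq : ∀ i, 0 < q i) (hx : ∀ i, 0 ≤ x i)
    (h : dotp q x ≤ 0) : x = 0 := by
  have h0 : dotp q x = 0 := le_antisymm h (dotp_nonneg (fun i => (hq i).le) hx)
  funext i
  have hz := (Finset.sum_eq_zero_iff_of_nonneg
    (fun i _ => mul_nonneg (hq i).le (hx i))).mp h0 i (Finset.mem_univ i)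
  rcases mul_eq_zero.mp hz with h' | h'
  · exact absurd h' (hq i).ne'
  · simpa using h'

/-! ### the scalar building block ψ -/

def psi (v : ℝ) : ℝ := v / (1 + |v|)

lemma psi_eq {v : ℝ} (h : 0 ≤ v) : psi v = v / (1 + v) := by rw [psi, abs_of_nonneg h]

lemma psi_zero : psi 0 = 0 := by simp [psi]

lemma psi_nonneg {v : ℝ} (h : 0 ≤ v) : 0 ≤ psi v := by
  rw [psi_eq h]; positivity

lemma psi_le_one {v : ℝ} (h : 0 ≤ v) : psi v ≤ 1 := by
  rw [psi_eq h, div_le_one (by linarith)]; linarith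

lemma psi_lt {a b : ℝ} (ha : 0 ≤ a) (hab : a < b) : psi a < psi b := by
  have hb : 0 ≤ b := le_trans ha hab.le
  rw [psi_eq ha, psi_eq hb, div_lt_div_iff₀ (by linarith) (by linarith)]
  nlinarith

lemma psi_upper {a b : ℝ} (ha : 0 ≤ a) (hb : 0 ≤ b) :
    psi b - psi a ≤ (b - a) / (1 + a) ^ 2 := by
  have hA : (0:ℝ) < 1 + a := by linarith
  have hB : (0:ℝ) < 1 + b := by linarith
  have h1 : psi b - psi a = (b - a) / ((1 + b) * (1 + a)) := by
    rw [psi_eq ha, psi_eq hb, div_sub_div _ _ hB.ne' hA.ne']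
    congr 1; ring
  rw [h1, div_le_div_iff₀ (by positivity) (by positivity)]
  nlinarith [sq_nonneg (b - a)]

lemma psi_upper_lt {a b : ℝ} (ha : 0 ≤ a) (hb : 0 ≤ b) (hne : b ≠ a) :
    psi b - psi a < (b - a) / (1 + a) ^ 2 := by
  have hA : (0:ℝ) < 1 + a := by linarith
  have hB : (0:ℝ) < 1 + b := by linarith
  have h1 : psi b - psi a = (b - a) / ((1 + b) * (1 + a)) := by
    rw [psi_eq ha, psi_eq hb, div_sub_div _ _ hB.ne' hA.ne']
    congr 1; ring
  have hba : b - a ≠ 0 := sub_ne_zero.mpr hne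
  have hsq : 0 < (b - a) ^ 2 := lt_of_le_of_ne (sq_nonneg _) (Ne.symm (pow_ne_zero 2 hba))
  rw [h1, div_lt_div_iff₀ (by positivity) (by positivity)]
  nlinarith


variable (p y : Fin T → Fin L → ℝ)

def ee (t : Fin T) : ℝ := dotp (p t) (y t)

def Q (t : Fin T) : Fin L → ℝ := if 0 < ee p y t then (ee p y t)⁻¹ • p t else p t

variable {p y}

lemma Q_pos (hp : ∀ t i, 0 < p t i) (t : Fin T) (i : Fin L) : 0 < Q p y t i := by
  unfold Q
  split
  · next h => exact mul_pos (inv_pos.mpr h) (hp t i)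
  · exact hp t i

lemma ee_nonneg (hp : ∀ t i, 0 < p t i) (hy : ∀ t, Nonneg (y t)) (t : Fin T) :
    0 ≤ ee p y t := dotp_nonneg (fun i => (hp t i).le) (hy t)

lemma y_eq_zero_of_inert (hp : ∀ t i, 0 < p t i) (hy : ∀ t, Nonneg (y t)) {t : Fin T}
    (h : ¬ 0 < ee p y t) : y t = 0 := by
  refine eq_zero_of_dotp (hp t) (hy t) ?_
  have := ee_nonneg hp hy t
  have : ee p y t = 0 := le_antisymm (not_lt.mp h) this
  exact le_of_eq this

lemma dotQ (t : Fin T) (x : Fin L → ℝ) (ht : 0 < ee p y t) :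
    dotp (Q p y t) x = (ee p y t)⁻¹ * dotp (p t) x := by
  unfold Q; rw [if_pos ht, dotp_smul]

lemma dotQ_self {t : Fin T} (ht : 0 < ee p y t) : dotp (Q p y t) (y t) = 1 := by
  rw [dotQ t (y t) ht]
  exact inv_mul_cancel₀ ht.ne'

lemma dotQ_le_one {t : Fin T} {z : Fin L → ℝ} (ht : 0 < ee p y t)
    (h : dotp (p t) z ≤ ee p y t) : dotp (Q p y t) z ≤ 1 := by
  rw [dotQ t z ht, inv_mul_eq_div, div_le_one ht]; exact h

lemma one_lt_dotQ {t : Fin T} {z : Fin L → ℝ} (ht : 0 < ee p y t)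
    (h : ee p y t < dotp (p t) z) : 1 < dotp (Q p y t) z := by
  rw [dotQ t z ht, inv_mul_eq_div, lt_div_iff₀ ht, one_mul]; exact h

lemma dotp_le_ee {t : Fin T} {z : Fin L → ℝ} (ht : 0 < ee p y t)
    (h : dotp (Q p y t) z ≤ 1) : dotp (p t) z ≤ ee p y t := by
  rw [dotQ t z ht, inv_mul_eq_div, div_le_one ht] at h; exact h

variable (p y)

def gapSet : Finset ℝ :=
  ((Finset.univ : Finset (Fin T × Fin T)).image
    fun ab => dotp (Q p y ab.1) (y ab.2) - 1).filter fun v => 0 < v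

def del : ℝ := if h : (gapSet p y).Nonempty then min 1 ((gapSet p y).min' h) else 1

variable {p y}

lemma del_pos : 0 < del p y := by
  unfold del
  split
  · next h =>
    refine lt_min one_pos ?_
    have := (gapSet p y).min'_mem h
    simp only [gapSet, Finset.mem_filter] at this
    exact this.2
  · exact one_pos

lemma del_le_one : del p y ≤ 1 := by
  unfold del
  split
  · exact min_le_left _ _
  · exact le_rfl

lemma del_gap {a b : Fin T} (h : 1 < dotp (Q p y a) (y b)) :
    1 + del p y ≤ dotp (Q p y a) (y b) := by
  have hmem : dotp (Q p y a) (y b) - 1 ∈ gapSet p y := by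
    simp only [gapSet, Finset.mem_filter, Finset.mem_image]
    exact ⟨⟨(a, b), Finset.mem_univ _, rfl⟩, by linarith⟩
  have hne : (gapSet p y).Nonempty := ⟨_, hmem⟩
  have : del p y ≤ dotp (Q p y a) (y b) - 1 := by
    unfold del
    rw [dif_pos hne]
    exact le_trans (min_le_right _ _) (Finset.min'_le _ _ hmem)
  linarith

variable (p y)

def beta (t : Fin T) (i : Fin L) : ℝ := Q p y t i * (1 + y t i) ^ 2
def phi (v : ℝ) : ℝ := min (v - 1) (del p y)
def Cm : ℝ := ∑ s : Fin T, ∑ i, beta p y s i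
def mu : ℝ := del p y / (1 + Cm p y)
def eta : ℝ := (1 + mu p y * Cm p y) / del p y

variable {p y}

lemma beta_pos (hp : ∀ t i, 0 < p t i) (hy : ∀ t, Nonneg (y t)) (t : Fin T) (i : Fin L) :
    0 < beta p y t i := by
  have h1 : (0:ℝ) < 1 + y t i := by have := hy t i; linarith
  exact mul_pos (Q_pos hp t i) (by positivity)

lemma Cm_nonneg (hp : ∀ t i, 0 < p t i) (hy : ∀ t, Nonneg (y t)) : 0 ≤ Cm p y :=
  Finset.sum_nonneg fun s _ => Finset.sum_nonneg fun i _ => (beta_pos hp hy s i).le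

lemma sum_beta_le_Cm (hp : ∀ t i, 0 < p t i) (hy : ∀ t, Nonneg (y t)) (t : Fin T) :
    ∑ i, beta p y t i ≤ Cm p y :=
  Finset.single_le_sum (fun s _ => Finset.sum_nonneg fun i _ => (beta_pos hp hy s i).le)
    (Finset.mem_univ t)

lemma mu_pos (hp : ∀ t i, 0 < p t i) (hy : ∀ t, Nonneg (y t)) : 0 < mu p y := by
  have := Cm_nonneg (p := p) (y := y) hp hy
  exact div_pos del_pos (by linarith)

lemma mu_Cm_le (hp : ∀ t i, 0 < p t i) (hy : ∀ t, Nonneg (y t)) :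
    mu p y * Cm p y ≤ del p y := by
  have hC := Cm_nonneg (p := p) (y := y) hp hy
  have h1 : (0:ℝ) < 1 + Cm p y := by linarith
  rw [mu, div_mul_eq_mul_div, div_le_iff₀ h1]
  nlinarith [del_pos (p := p) (y := y)]

lemma eta_nonneg (hp : ∀ t i, 0 < p t i) (hy : ∀ t, Nonneg (y t)) : 0 ≤ eta p y := by
  have := mu_pos (p := p) (y := y) hp hy
  have := Cm_nonneg (p := p) (y := y) hp hy
  exact div_nonneg (by nlinarith) del_pos.le

lemma eta_mul_del : eta p y * del p y = 1 + mu p y * Cm p y := by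
  rw [eta, div_mul_cancel₀]
  exact del_pos.ne'

/-! phi lemmas -/

lemma phi_le_sub (v : ℝ) : phi p y v ≤ v - 1 := min_le_left _ _
lemma phi_le_del (v : ℝ) : phi p y v ≤ del p y := min_le_right _ _

lemma phi_neg_one_le {v : ℝ} (h : 0 ≤ v) : -1 ≤ phi p y v :=
  le_min (by linarith) (by linarith [del_pos (p := p) (y := y)])

lemma phi_one : phi p y 1 = 0 := by
  rw [phi]
  simp only [sub_self]
  exact min_eq_left del_pos.le

lemma phi_zero : phi p y 0 = -1 := by
  have := del_pos (p := p) (y := y)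
  rw [phi]
  rw [min_eq_left (by linarith)]
  norm_num

lemma phi_mono {v w : ℝ} (h : v ≤ w) : phi p y v ≤ phi p y w :=
  min_le_min (by linarith) le_rfl

lemma phi_eq_del {v : ℝ} (h : 1 + del p y ≤ v) : phi p y v = del p y :=
  min_eq_right (by linarith)

lemma phi_comb {a b v w : ℝ} (ha : 0 ≤ a) (hb : 0 ≤ b) (hab : a + b = 1) :
    a * phi p y v + b * phi p y w ≤ phi p y (a * v + b * w) := by
  refine le_min ?_ ?_
  · have h1 : a * phi p y v ≤ a * (v - 1) := mul_le_mul_of_nonneg_left (phi_le_sub v) ha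
    have h2 : b * phi p y w ≤ b * (w - 1) := mul_le_mul_of_nonneg_left (phi_le_sub w) hb
    nlinarith
  · have h1 : a * phi p y v ≤ a * del p y := mul_le_mul_of_nonneg_left (phi_le_del v) ha
    have h2 : b * phi p y w ≤ b * del p y := mul_le_mul_of_nonneg_left (phi_le_del w) hb
    calc a * phi p y v + b * phi p y w ≤ a * del p y + b * del p y := add_le_add h1 h2
      _ = del p y := by rw [← add_mul, hab, one_mul]

/-! ### the preference function building blocks -/

variable (p y)

def nn (t : Fin T) (x : Fin L → ℝ) : ℝ := ∑ i, beta p y t i * (psi (x i) - psi (y t i))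

def uu (s : Fin T) (x : Fin L → ℝ) : ℝ :=
  mu p y * nn p y s x + phi p y (dotp (Q p y s) x) - phi p y (dotp (Q p y s) (y s))

def Ts (s : Fin T) : Finset (Fin T) :=
  Finset.univ.filter fun t => 0 < ee p y t ∧ y t ≠ y s ∧ dotp (Q p y s) (y t) ≤ 1

def DD (s : Fin T) (x : Fin L → ℝ) : ℝ :=
  eta p y * ∑ t ∈ Ts p y s, max 0 (1 + del p y - dotp (Q p y t) x)

def AA (s : Fin T) (x z : Fin L → ℝ) : ℝ := uu p y s x + DD p y s z

def WW (hT : 0 < T) (x z : Fin L → ℝ) : ℝ :=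
  (Finset.univ : Finset (Fin T)).inf' (Finset.univ_nonempty_iff.mpr ⟨⟨0, hT⟩⟩)
    fun s => AA p y s x z

def rr (hT : 0 < T) (x z : Fin L → ℝ) : ℝ := WW p y hT x z - WW p y hT z x

variable {p y}

lemma nn_self (t : Fin T) : nn p y t (y t) = 0 := by simp [nn]

lemma nn_support_le (hp : ∀ t i, 0 < p t i) (hy : ∀ t, Nonneg (y t)) {t : Fin T}
    {x w : Fin L → ℝ} (hx : Nonneg x) (hw : Nonneg w) :
    nn p y t x ≤ (∑ i, beta p y t i * ((x i - w i) / (1 + w i) ^ 2)) + nn p y t w := by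
  have hdiff : nn p y t x - nn p y t w = ∑ i, beta p y t i * (psi (x i) - psi (w i)) := by
    rw [nn, nn, ← Finset.sum_sub_distrib]
    exact Finset.sum_congr rfl fun i _ => by ring
  have hle : ∑ i, beta p y t i * (psi (x i) - psi (w i)) ≤
      ∑ i, beta p y t i * ((x i - w i) / (1 + w i) ^ 2) :=
    Finset.sum_le_sum fun i _ =>
      mul_le_mul_of_nonneg_left (psi_upper (hw i) (hx i)) (beta_pos hp hy t i).le
  linarith

lemma nn_support_lt (hp : ∀ t i, 0 < p t i) (hy : ∀ t, Nonneg (y t)) {t : Fin T}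
    {x w : Fin L → ℝ} (hx : Nonneg x) (hw : Nonneg w) (hne : x ≠ w) :
    nn p y t x < (∑ i, beta p y t i * ((x i - w i) / (1 + w i) ^ 2)) + nn p y t w := by
  have hdiff : nn p y t x - nn p y t w = ∑ i, beta p y t i * (psi (x i) - psi (w i)) := by
    rw [nn, nn, ← Finset.sum_sub_distrib]
    exact Finset.sum_congr rfl fun i _ => by ring
  obtain ⟨i₀, hi₀⟩ := Function.ne_iff.mp hne
  have hlt : ∑ i, beta p y t i * (psi (x i) - psi (w i)) <
      ∑ i, beta p y t i * ((x i - w i) / (1 + w i) ^ 2) := by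
    refine Finset.sum_lt_sum (fun i _ =>
      mul_le_mul_of_nonneg_left (psi_upper (hw i) (hx i)) (beta_pos hp hy t i).le)
      ⟨i₀, Finset.mem_univ i₀, ?_⟩
    exact mul_lt_mul_of_pos_left (psi_upper_lt (hw i₀) (hx i₀) hi₀) (beta_pos hp hy t i₀)
  linarith

lemma grad_y (hy : ∀ t, Nonneg (y t)) {t : Fin T} (ht : 0 < ee p y t) (x : Fin L → ℝ) :
    (∑ i, beta p y t i * ((x i - y t i) / (1 + y t i) ^ 2)) = dotp (Q p y t) x - 1 := by
  have h1 : ∀ i, beta p y t i * ((x i - y t i) / (1 + y t i) ^ 2)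
      = Q p y t i * x i - Q p y t i * y t i := by
    intro i
    have h0 : (0:ℝ) < 1 + y t i := by have := hy t i; linarith
    rw [beta]
    field_simp
  rw [Finset.sum_congr rfl fun i _ => h1 i, Finset.sum_sub_distrib]
  have h2 : ∑ i, Q p y t i * y t i = 1 := dotQ_self ht
  rw [show (∑ i, Q p y t i * x i) = dotp (Q p y t) x from rfl, h2]

lemma nn_budget_lt (hp : ∀ t i, 0 < p t i) (hy : ∀ t, Nonneg (y t)) {t : Fin T}
    (ht : 0 < ee p y t) {z : Fin L → ℝ} (hz : Nonneg z) (hne : z ≠ y t) :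
    nn p y t z < dotp (Q p y t) z - 1 := by
  have := nn_support_lt hp hy hz (hy t) hne (t := t)
  rw [nn_self, grad_y hy ht] at this
  linarith

lemma nn_lower (hp : ∀ t i, 0 < p t i) (hy : ∀ t, Nonneg (y t)) {s : Fin T}
    {x : Fin L → ℝ} (hx : Nonneg x) : -(Cm p y) ≤ nn p y s x := by
  have h1 : ∀ i ∈ Finset.univ, -(beta p y s i) ≤ beta p y s i * (psi (x i) - psi (y s i)) := by
    intro i _
    have hb := (beta_pos hp hy s i).le
    have := psi_nonneg (hx i)
    have := psi_le_one (hy s i)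
    nlinarith
  have h2 : ∑ i, -(beta p y s i) ≤ nn p y s x := Finset.sum_le_sum h1
  have h3 : ∑ i, -(beta p y s i) = -(∑ i, beta p y s i) := by simp
  have h4 := sum_beta_le_Cm hp hy s
  rw [h3] at h2
  linarith

lemma nn_mono (hL : 0 < L) (hp : ∀ t i, 0 < p t i) (hy : ∀ t, Nonneg (y t)) {s : Fin T}
    {z x : Fin L → ℝ} (hz : Nonneg z) (h : ∀ i, z i < x i) : nn p y s z < nn p y s x := by
  have : Nonempty (Fin L) := ⟨⟨0, hL⟩⟩
  exact Finset.sum_lt_sum_of_nonempty Finset.univ_nonempty fun i _ =>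
    mul_lt_mul_of_pos_left (by have := psi_lt (hz i) (h i); linarith) (beta_pos hp hy s i)

lemma uu_self (s : Fin T) : uu p y s (y s) = 0 := by rw [uu, nn_self]; ring

lemma uu_mono (hL : 0 < L) (hp : ∀ t i, 0 < p t i) (hy : ∀ t, Nonneg (y t)) {s : Fin T}
    {z x : Fin L → ℝ} (hz : Nonneg z) (h : ∀ i, z i < x i) : uu p y s z < uu p y s x := by
  have h1 := nn_mono hL hp hy hz h (s := s)
  have h2 : dotp (Q p y s) z ≤ dotp (Q p y s) x :=
    dotp_mono (fun i => (Q_pos hp s i).le) (fun i => (h i).le)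
  have h3 := phi_mono (p := p) (y := y) h2
  have hmu := mu_pos hp hy
  rw [uu, uu]
  have := mul_lt_mul_of_pos_left h1 hmu
  linarith

lemma uu_comb (hp : ∀ t i, 0 < p t i) (hy : ∀ t, Nonneg (y t)) {s : Fin T}
    {x w : Fin L → ℝ} (hx : Nonneg x) (hw : Nonneg w) (hne : x ≠ w)
    {a b : ℝ} (ha : 0 < a) (hb : 0 < b) (hab : a + b = 1) :
    a * uu p y s x + b * uu p y s w < uu p y s (a • x + b • w) := by
  set m := a • x + b • w with hm
  have hmapp : ∀ i, m i = a * x i + b * w i := fun i => rfl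
  have hmnn : Nonneg m := fun i => by
    rw [hmapp i]
    exact add_nonneg (mul_nonneg ha.le (hx i)) (mul_nonneg hb.le (hw i))
  have hxm : x ≠ m := by
    intro hcon
    apply hne
    funext i
    have hxi := congrFun hcon i
    rw [hmapp i] at hxi
    have hbi : b * x i = b * w i := by linear_combination hxi + x i * hab
    exact mul_left_cancel₀ hb.ne' hbi
  have h1 := nn_support_lt hp hy hx hmnn hxm (t := s)
  have h2 := nn_support_le hp hy hw hmnn (t := s)
  have h3 : a * (∑ i, beta p y s i * ((x i - m i) / (1 + m i) ^ 2))
      + b * (∑ i, beta p y s i * ((w i - m i) / (1 + m i) ^ 2)) = 0 := by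
    rw [Finset.mul_sum, Finset.mul_sum, ← Finset.sum_add_distrib]
    apply Finset.sum_eq_zero
    intro i _
    have hnum : a * (x i - m i) + b * (w i - m i) = 0 := by
      rw [hmapp i]; linear_combination (-(a * x i + b * w i)) * hab
    have hrw : a * (beta p y s i * ((x i - m i) / (1 + m i) ^ 2))
        + b * (beta p y s i * ((w i - m i) / (1 + m i) ^ 2))
        = beta p y s i * ((a * (x i - m i) + b * (w i - m i)) / (1 + m i) ^ 2) := by
      ring
    rw [hrw, hnum, zero_div, mul_zero]
  have e1 := mul_lt_mul_of_pos_left h1 ha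
  have e2 := mul_le_mul_of_nonneg_left h2 hb.le
  rw [mul_add] at e1 e2
  have e3 : a * nn p y s m + b * nn p y s m = nn p y s m := by rw [← add_mul, hab, one_mul]
  have hnn : a * nn p y s x + b * nn p y s w < nn p y s m := by linarith
  have hdot : dotp (Q p y s) m = a * dotp (Q p y s) x + b * dotp (Q p y s) w :=
    dotp_lin (Q p y s) x w a b
  have hphi : a * phi p y (dotp (Q p y s) x) + b * phi p y (dotp (Q p y s) w)
      ≤ phi p y (dotp (Q p y s) m) := by
    rw [hdot]; exact phi_comb ha.le hb.le hab
  have hmu := mu_pos hp hy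
  have k1 := mul_lt_mul_of_pos_left hnn hmu
  have k2 : a * phi p y (dotp (Q p y s) (y s)) + b * phi p y (dotp (Q p y s) (y s))
      = phi p y (dotp (Q p y s) (y s)) := by rw [← add_mul, hab, one_mul]
  rw [uu, uu, uu]
  nlinarith [k1, hphi, k2]

lemma DD_nonneg (hp : ∀ t i, 0 < p t i) (hy : ∀ t, Nonneg (y t)) (s : Fin T)
    (x : Fin L → ℝ) : 0 ≤ DD p y s x :=
  mul_nonneg (eta_nonneg hp hy) (Finset.sum_nonneg fun t _ => le_max_left _ _)

lemma DD_antitone (hp : ∀ t i, 0 < p t i) (hy : ∀ t, Nonneg (y t)) {s : Fin T}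
    {z x : Fin L → ℝ} (h : ∀ i, z i ≤ x i) : DD p y s x ≤ DD p y s z := by
  refine mul_le_mul_of_nonneg_left (Finset.sum_le_sum fun t _ => ?_) (eta_nonneg hp hy)
  have := dotp_mono (q := Q p y t) (fun i => (Q_pos hp t i).le) h
  exact max_le_max le_rfl (by linarith)

lemma DD_comb (hp : ∀ t i, 0 < p t i) (hy : ∀ t, Nonneg (y t)) {s : Fin T}
    {x w : Fin L → ℝ} {a b : ℝ} (ha : 0 ≤ a) (hb : 0 ≤ b) (hab : a + b = 1) :
    DD p y s (a • x + b • w) ≤ a * DD p y s x + b * DD p y s w := by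
  rw [DD, DD, DD]
  have key : ∀ t ∈ Ts p y s, max 0 (1 + del p y - dotp (Q p y t) (a • x + b • w))
      ≤ a * max 0 (1 + del p y - dotp (Q p y t) x)
        + b * max 0 (1 + del p y - dotp (Q p y t) w) := by
    intro t _
    have hdot := dotp_lin (Q p y t) x w a b
    have hEq : 1 + del p y - dotp (Q p y t) (a • x + b • w)
        = a * (1 + del p y - dotp (Q p y t) x) + b * (1 + del p y - dotp (Q p y t) w) := by
      rw [hdot]; linear_combination (1 + del p y) * hab.symm
    rw [hEq]
    refine max_le (add_nonneg (mul_nonneg ha (le_max_left _ _))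
      (mul_nonneg hb (le_max_left _ _))) ?_
    exact add_le_add (mul_le_mul_of_nonneg_left (le_max_right _ _) ha)
      (mul_le_mul_of_nonneg_left (le_max_right _ _) hb)
  have hsum := Finset.sum_le_sum key
  have heta := eta_nonneg (p := p) (y := y) hp hy
  calc eta p y * ∑ t ∈ Ts p y s, max 0 (1 + del p y - dotp (Q p y t) (a • x + b • w))
      ≤ eta p y * ∑ t ∈ Ts p y s, (a * max 0 (1 + del p y - dotp (Q p y t) x)
        + b * max 0 (1 + del p y - dotp (Q p y t) w)) :=
        mul_le_mul_of_nonneg_left hsum heta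
    _ = a * (eta p y * ∑ t ∈ Ts p y s, max 0 (1 + del p y - dotp (Q p y t) x))
        + b * (eta p y * ∑ t ∈ Ts p y s, max 0 (1 + del p y - dotp (Q p y t) w)) := by
        rw [Finset.sum_add_distrib, ← Finset.mul_sum, ← Finset.mul_sum]; ring

lemma DD_lb (hp : ∀ t i, 0 < p t i) (hy : ∀ t, Nonneg (y t)) {s t : Fin T}
    {z : Fin L → ℝ} (hmem : t ∈ Ts p y s) (hz : dotp (Q p y t) z ≤ 1) :
    eta p y * del p y ≤ DD p y s z := by
  have h1 : del p y ≤ max 0 (1 + del p y - dotp (Q p y t) z) :=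
    le_trans (by linarith) (le_max_right 0 _)
  have h2 : max 0 (1 + del p y - dotp (Q p y t) z)
      ≤ ∑ t' ∈ Ts p y s, max 0 (1 + del p y - dotp (Q p y t') z) :=
    Finset.single_le_sum (f := fun t' => max 0 (1 + del p y - dotp (Q p y t') z))
      (fun t' _ => le_max_left _ _) hmem
  exact mul_le_mul_of_nonneg_left (h1.trans h2) (eta_nonneg hp hy)


/-! ### WW and rationalization -/

lemma DD_self (hW : WARP p y) {t : Fin T} (ht : 0 < ee p y t) : DD p y t (y t) = 0 := by
  rw [DD, Finset.sum_eq_zero, mul_zero]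
  intro t' hmem
  rw [Ts, Finset.mem_filter] at hmem
  obtain ⟨-, ht', hne', hle'⟩ := hmem
  have h1 : dotp (p t) (y t') ≤ ee p y t := dotp_le_ee ht hle'
  have h2 : ee p y t' < dotp (p t') (y t) := by
    by_contra hcon
    push_neg at hcon
    exact hW ⟨t', t, hne'.symm, h1, hcon⟩
  have h4 := one_lt_dotQ ht' h2
  have h5 := del_gap h4
  exact max_eq_left (by linarith)

lemma WW_le (hT : 0 < T) (s : Fin T) (x z : Fin L → ℝ) :
    WW p y hT x z ≤ AA p y s x z :=
  Finset.inf'_le _ (Finset.mem_univ s)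

lemma WW_comb (hp : ∀ t i, 0 < p t i) (hy : ∀ t, Nonneg (y t)) (hT : 0 < T)
    {x w z : Fin L → ℝ} (hx : Nonneg x) (hw : Nonneg w) (hne : x ≠ w)
    {a b : ℝ} (ha : 0 < a) (hb : 0 < b) (hab : a + b = 1) :
    a * WW p y hT x z + b * WW p y hT w z < WW p y hT (a • x + b • w) z := by
  obtain ⟨s₀, -, hs₀⟩ := Finset.exists_mem_eq_inf'
    (Finset.univ_nonempty_iff.mpr ⟨⟨0, hT⟩⟩) (fun s => AA p y s (a • x + b • w) z)
  have hW0 : WW p y hT (a • x + b • w) z = AA p y s₀ (a • x + b • w) z := hs₀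
  have hu := uu_comb hp hy hx hw hne ha hb hab (s := s₀)
  have hDc : a * DD p y s₀ z + b * DD p y s₀ z = DD p y s₀ z := by
    rw [← add_mul, hab, one_mul]
  have expand : a * AA p y s₀ x z + b * AA p y s₀ w z
      = (a * uu p y s₀ x + b * uu p y s₀ w) + (a * DD p y s₀ z + b * DD p y s₀ z) := by
    rw [AA, AA]; ring
  have hA : a * AA p y s₀ x z + b * AA p y s₀ w z < AA p y s₀ (a • x + b • w) z := by
    rw [expand, hDc, AA]; linarith
  have l1 : WW p y hT x z ≤ AA p y s₀ x z := WW_le hT s₀ x z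
  have l2 : WW p y hT w z ≤ AA p y s₀ w z := WW_le hT s₀ w z
  rw [hW0]
  have := add_le_add (mul_le_mul_of_nonneg_left l1 ha.le) (mul_le_mul_of_nonneg_left l2 hb.le)
  linarith

lemma rr_mono (hL : 0 < L) (hp : ∀ t i, 0 < p t i) (hy : ∀ t, Nonneg (y t)) (hT : 0 < T)
    {x z w : Fin L → ℝ} (hz : Nonneg z) (h : ∀ i, z i < x i) :
    rr p y hT z w < rr p y hT x w := by
  obtain ⟨s₀, -, hs₀⟩ := Finset.exists_mem_eq_inf'
    (Finset.univ_nonempty_iff.mpr ⟨⟨0, hT⟩⟩) (fun s => AA p y s x w)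
  have h1 : WW p y hT z w ≤ AA p y s₀ z w := WW_le hT s₀ z w
  have h2 : AA p y s₀ z w < AA p y s₀ x w := by
    rw [AA, AA]
    have := uu_mono hL hp hy hz h (s := s₀)
    linarith
  have h3 : WW p y hT x w = AA p y s₀ x w := hs₀
  have h4 : WW p y hT w x ≤ WW p y hT w z := by
    refine Finset.le_inf' _ _ fun s _ => ?_
    have hAs : AA p y s w x ≤ AA p y s w z := by
      rw [AA, AA]
      have := DD_antitone hp hy (fun i => (h i).le) (s := s)
      linarith
    exact le_trans (WW_le hT s w x) hAs
  rw [rr, rr]; linarith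

lemma AA_nonneg (hW : WARP p y) (hp : ∀ t i, 0 < p t i) (hy : ∀ t, Nonneg (y t))
    {t : Fin T} (ht : 0 < ee p y t) {z : Fin L → ℝ} (hz : Nonneg z)
    (hbud : dotp (Q p y t) z ≤ 1) (s : Fin T) : 0 ≤ AA p y s (y t) z := by
  rw [AA]
  by_cases hey : y s = y t
  · have h1 : uu p y s (y t) = 0 := by rw [← hey, uu_self]
    rw [h1, zero_add]
    exact DD_nonneg hp hy s z
  · by_cases hs : 0 < ee p y s
    · by_cases hQ : dotp (Q p y s) (y t) ≤ 1
      · have hmem : t ∈ Ts p y s := by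
          rw [Ts, Finset.mem_filter]
          exact ⟨Finset.mem_univ t, ht, fun hc => hey hc.symm, hQ⟩
        have hD := DD_lb hp hy hmem hbud
        rw [eta_mul_del] at hD
        have hnl := nn_lower hp hy (hy t) (s := s)
        have hphi1 : -1 ≤ phi p y (dotp (Q p y s) (y t)) :=
          phi_neg_one_le (dotp_nonneg (fun i => (Q_pos hp s i).le) (hy t))
        have hphi2 : phi p y (dotp (Q p y s) (y s)) = 0 := by rw [dotQ_self hs, phi_one]
        have hmu := (mu_pos hp hy (p := p) (y := y)).le
        have hmuC : mu p y * (-(Cm p y)) ≤ mu p y * nn p y s (y t) :=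
          mul_le_mul_of_nonneg_left hnl hmu
        have hneg : mu p y * (-(Cm p y)) = -(mu p y * Cm p y) := by ring
        rw [uu, hphi2]
        linarith
      · push_neg at hQ
        have h5 := del_gap hQ
        have hphi : phi p y (dotp (Q p y s) (y t)) = del p y := phi_eq_del h5
        have hphi2 : phi p y (dotp (Q p y s) (y s)) = 0 := by rw [dotQ_self hs, phi_one]
        have hnl := nn_lower hp hy (hy t) (s := s)
        have hmu := (mu_pos hp hy (p := p) (y := y)).le
        have hmuC := mul_le_mul_of_nonneg_left hnl hmu
        have hMC := mu_Cm_le hp hy (p := p) (y := y)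
        have hD := DD_nonneg hp hy s z
        have hneg : mu p y * (-(Cm p y)) = -(mu p y * Cm p y) := by ring
        rw [uu, hphi, hphi2]
        linarith
    · have hys : y s = 0 := y_eq_zero_of_inert hp hy hs
      have hq0 : dotp (Q p y s) (y s) = 0 := by rw [hys]; simp [dotp]
      have hphi2 : phi p y (dotp (Q p y s) (y s)) = -1 := by rw [hq0, phi_zero]
      have hnn0 : 0 ≤ nn p y s (y t) := by
        rw [nn]
        refine Finset.sum_nonneg fun i _ => ?_
        refine mul_nonneg (beta_pos hp hy s i).le ?_
        have h0 : y s i = 0 := by rw [hys]; rfl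
        rw [h0, psi_zero, sub_zero]
        exact psi_nonneg (hy t i)
      have hphi1 : -1 ≤ phi p y (dotp (Q p y s) (y t)) :=
        phi_neg_one_le (dotp_nonneg (fun i => (Q_pos hp s i).le) (hy t))
      have hmu := (mu_pos hp hy (p := p) (y := y)).le
      have hD := DD_nonneg hp hy s z
      rw [uu, hphi2]
      nlinarith [mul_nonneg hmu hnn0]

lemma rr_pos (hW : WARP p y) (hp : ∀ t i, 0 < p t i) (hy : ∀ t, Nonneg (y t)) (hT : 0 < T)
    {t : Fin T} {z : Fin L → ℝ} (hz : Nonneg z)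
    (hle : dotp (p t) z ≤ dotp (p t) (y t)) (hne : z ≠ y t) :
    0 < rr p y hT (y t) z := by
  by_cases ht : 0 < ee p y t
  · have hbud : dotp (Q p y t) z ≤ 1 := dotQ_le_one ht hle
    have h1 : (0:ℝ) ≤ WW p y hT (y t) z :=
      Finset.le_inf' _ _ fun s _ => AA_nonneg hW hp hy ht hz hbud s
    have h2 : WW p y hT z (y t) ≤ AA p y t z (y t) := WW_le hT t z (y t)
    have h3 : AA p y t z (y t) = uu p y t z := by
      rw [AA, DD_self hW ht, add_zero]
    have h4 : uu p y t z < 0 := by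
      have hnb := nn_budget_lt hp hy ht hz hne
      have hphi2 : phi p y (dotp (Q p y t) (y t)) = 0 := by rw [dotQ_self ht, phi_one]
      have hphile := phi_le_sub (p := p) (y := y) (dotp (Q p y t) z)
      have hmu := mu_pos hp hy (p := p) (y := y)
      rw [uu, hphi2]
      have hlt := mul_lt_mul_of_pos_left hnb hmu
      nlinarith [mul_nonneg hmu.le (by linarith : (0:ℝ) ≤ 1 - dotp (Q p y t) z)]
    rw [rr]; linarith
  · exfalso
    have hyt : y t = 0 := y_eq_zero_of_inert hp hy ht
    have hd0 : dotp (p t) z ≤ 0 := by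
      rw [hyt] at hle
      simpa [dotp] using hle
    have hz0 : z = 0 := eq_zero_of_dotp (hp t) hz hd0
    exact hne (hz0.trans hyt.symm)


/-! ### concavity of the pieces -/

lemma convex_orthant : Convex ℝ {x : Fin L → ℝ | Nonneg x} := by
  intro x hx z hz a b ha hb hab i
  exact add_nonneg (mul_nonneg ha (hx i)) (mul_nonneg hb (hz i))

lemma piece_concave (hp : ∀ t i, 0 < p t i) (hy : ∀ t, Nonneg (y t)) (hT : 0 < T)
    (k : Fin T) {z : Fin L → ℝ} :
    StrictConcaveOn ℝ {x : Fin L → ℝ | Nonneg x}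
      (fun x => WW p y hT x z - AA p y k z x) := by
  constructor
  · exact convex_orthant
  · intro x hx w hw hne a b ha hb hab
    simp only [smul_eq_mul]
    have hWW := WW_comb hp hy hT hx hw hne ha hb hab (z := z)
    have hDD := DD_comb hp hy (s := k) (x := x) (w := w) ha.le hb.le hab
    have hu : a * uu p y k z + b * uu p y k z = uu p y k z := by rw [← add_mul, hab, one_mul]
    have expand : a * (WW p y hT x z - AA p y k z x) + b * (WW p y hT w z - AA p y k z w)
        = (a * WW p y hT x z + b * WW p y hT w z)
          - (a * uu p y k z + b * uu p y k z) - (a * DD p y k x + b * DD p y k w) := by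
      rw [AA, AA]; ring
    rw [expand, hu, AA]
    linarith

lemma isGreatest_pieces (hT : 0 < T) (x z : Fin L → ℝ) :
    IsGreatest (Set.range fun k : Fin T => WW p y hT x z - AA p y k z x)
      (rr p y hT x z) := by
  constructor
  · obtain ⟨k₀, -, hk₀⟩ := Finset.exists_mem_eq_inf'
      (Finset.univ_nonempty_iff.mpr ⟨⟨0, hT⟩⟩) (fun s => AA p y s z x)
    refine ⟨k₀, ?_⟩
    have hW0 : WW p y hT z x = AA p y k₀ z x := hk₀
    rw [rr, hW0]
  · rintro v ⟨k, rfl⟩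
    have := WW_le hT k z x (p := p) (y := y)
    rw [rr]
    simp only []
    linarith

/-! ### continuity -/

lemma cont_inf' {ι X : Type*} [TopologicalSpace X] (f : ι → X → ℝ)
    (hf : ∀ i, Continuous (f i)) :
    ∀ (s : Finset ι) (hs : s.Nonempty), Continuous fun x => s.inf' hs fun i => f i x := by
  intro s
  induction s using Finset.cons_induction with
  | empty => intro hs; exact absurd hs (by simp)
  | cons a s ha ih =>
    intro _
    rcases s.eq_empty_or_nonempty with rfl | hs
    · simpa using hf a
    · simp only [Finset.inf'_cons hs]
      exact (hf a).min (ih hs)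

lemma cont_psi : Continuous psi :=
  continuous_id.div (continuous_const.add continuous_abs) (fun v => by positivity)

lemma cont_dotp (q : Fin L → ℝ) : Continuous fun x : Fin L → ℝ => dotp q x := by
  unfold dotp
  exact continuous_finset_sum _ fun i _ => continuous_const.mul (continuous_apply i)

lemma cont_phi : Continuous (phi p y) :=
  (continuous_id.sub continuous_const).min continuous_const

lemma cont_nn (t : Fin T) : Continuous (nn p y t) := by
  unfold nn
  exact continuous_finset_sum _ fun i _ =>
    continuous_const.mul ((cont_psi.comp (continuous_apply i)).sub continuous_const)

lemma cont_uu (s : Fin T) : Continuous (uu p y s) := by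
  unfold uu
  exact ((continuous_const.mul (cont_nn s)).add (cont_phi.comp (cont_dotp _))).sub continuous_const

lemma cont_DD (s : Fin T) : Continuous (DD p y s) := by
  unfold DD
  refine continuous_const.mul ?_
  exact continuous_finset_sum _ fun t _ =>
    continuous_const.max (continuous_const.sub (cont_dotp _))

lemma cont_WW (hT : 0 < T) :
    Continuous fun q : (Fin L → ℝ) × (Fin L → ℝ) => WW p y hT q.1 q.2 := by
  unfold WW
  refine cont_inf' (fun s (q : (Fin L → ℝ) × (Fin L → ℝ)) => AA p y s q.1 q.2) ?_ _ _
  intro s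
  unfold AA
  exact ((cont_uu s).comp continuous_fst).add ((cont_DD s).comp continuous_snd)

lemma cont_rr (hT : 0 < T) :
    Continuous fun q : (Fin L → ℝ) × (Fin L → ℝ) => rr p y hT q.1 q.2 := by
  have h2 : Continuous fun q : (Fin L → ℝ) × (Fin L → ℝ) => WW p y hT q.2 q.1 := by
    unfold WW
    refine cont_inf' (fun s (q : (Fin L → ℝ) × (Fin L → ℝ)) => AA p y s q.2 q.1) ?_ _ _
    intro s
    unfold AA
    exact ((cont_uu s).comp continuous_snd).add ((cont_DD s).comp continuous_fst)
  unfold rr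
  exact (cont_WW hT).sub h2

lemma cont_pieces (hT : 0 < T) :
    Continuous fun q : Fin T × (Fin L → ℝ) × (Fin L → ℝ) =>
      WW p y hT q.2.1 q.2.2 - AA p y q.1 q.2.2 q.2.1 := by
  have h1 : Continuous fun q : Fin T × (Fin L → ℝ) × (Fin L → ℝ) => WW p y hT q.2.1 q.2.2 :=
    (cont_WW hT).comp continuous_snd
  refine h1.sub ?_
  have h2 : (fun q : Fin T × (Fin L → ℝ) × (Fin L → ℝ) => AA p y q.1 q.2.2 q.2.1)
      = fun q => ∑ k, if q.1 = k then AA p y k q.2.2 q.2.1 else 0 := by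
    funext q
    rw [Finset.sum_ite_eq]
    simp
  rw [h2]
  refine continuous_finset_sum _ fun k _ => ?_
  have hop : IsOpen {q : Fin T × (Fin L → ℝ) × (Fin L → ℝ) | q.1 = k} :=
    (isOpen_discrete ({k} : Set (Fin T))).preimage continuous_fst
  have hcl : IsClosed {q : Fin T × (Fin L → ℝ) × (Fin L → ℝ) | q.1 = k} :=
    (isClosed_discrete ({k} : Set (Fin T))).preimage continuous_fst
  refine Continuous.if ?_ ?_ continuous_const
  · intro a ha
    rw [frontier, hcl.closure_eq, hop.interior_eq, Set.diff_self] at ha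
    exact absurd ha (Set.notMem_empty a)
  · have : Continuous fun q : Fin T × (Fin L → ℝ) × (Fin L → ℝ) =>
        uu p y k q.2.2 + DD p y k q.2.1 :=
      ((cont_uu k).comp (continuous_snd.comp continuous_snd)).add
        ((cont_DD k).comp (continuous_fst.comp continuous_snd))
    exact this

end WarpAux

/-- Lemma 1 of the paper: a dataset satisfies WARP if and only if
it is strictly rationalized by a continuous, strictly increasing, skew-symmetric
and strictly piecewise concave preference function. -/
theorem warp_iff_strict_preference_function_rationalization
    {L T : ℕ} (hL : 2 ≤ L) (hT : 1 ≤ T)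
    (p y : Fin T → Fin L → ℝ)
    (hp : ∀ t i, 0 < p t i) (hy : ∀ t, Nonneg (y t)) :
    WARP p y ↔
      ∃ r : (Fin L → ℝ) → (Fin L → ℝ) → ℝ,
        ContinuousOnOrthant r ∧ StrictlyIncreasingFirst r ∧ SkewSymmetric r ∧
        StrictPiecewiseConcave r ∧ StrictlyRationalizes p y r := by
  have hT0 : 0 < T := hT
  have hL0 : 0 < L := by omega
  constructor
  · intro hW
    refine ⟨WarpAux.rr p y hT0, ?_, ?_, ?_, ?_, ?_⟩
    · exact (WarpAux.cont_rr hT0).continuousOn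
    · intro x z w hx hz hw hlt
      exact WarpAux.rr_mono hL0 hp hy hT0 hz hlt
    · intro x z _ _
      unfold WarpAux.rr
      ring
    · refine ⟨Fin T, inferInstance, inferInstance, ⟨⟨0, hT0⟩⟩,
        fun k x z => WarpAux.WW p y hT0 x z - WarpAux.AA p y k z x, ?_, ?_, ?_⟩
      · exact (WarpAux.cont_pieces hT0).continuousOn
      · intro k z hz
        exact WarpAux.piece_concave hp hy hT0 k
      · intro x z hx hz
        exact WarpAux.isGreatest_pieces hT0 x z
    · intro t z hz hge hne
      exact WarpAux.rr_pos hW hp hy hT0 hz hge hne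
  · rintro ⟨r, hcont, hmono, hskew, hconc, hrat⟩ ⟨s, t, hne, h1, h2⟩
    have ha := hrat t (y s) (hy s) h1 hne.symm
    have hb := hrat s (y t) (hy t) h2 hne
    have hsk := hskew (y t) (y s) (hy t) (hy s)
    linarith
end
end

section
/- Fix T ≥ 1, nonempty finite patch sets I_1,…,I_T, a nonempty finite set A of types, and a stochastic choice function ρ = (ρ_{i|t}). Then the following are equivalent: (i) there exists ν that rationalizes ρ over A; (ii) ρ satisfies the Weak Axiom of Revealed Stochastic Preference with respect to A, namely: for every function m assigning a natural number m(t,i) to each pair (t, i) with i ∈ I_t, one has Σ_{t=1}^T Σ_{i∈I_t} m(t,i)·ρ_{i|t} ≤ max_{a∈A} Σ_{t=1}^T m(t, a(t)). -/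
open scoped BigOperators Classical

noncomputable section

/-- `ρ` is a stochastic choice function on the patch sets `I t`. -/
def StochasticChoice {T : ℕ} {I : Fin T → Type*} [∀ t, Fintype (I t)]
    (ρ : ∀ t, I t → ℝ) : Prop :=
  (∀ t i, 0 ≤ ρ t i) ∧ ∀ t, ∑ i, ρ t i = 1

/-- `ν` rationalizes the stochastic choice function `ρ` over the finite set `A`
of types: `ν` is nonnegative on `A`, sums to one over `A`, and for every period
`t` and patch `i ∈ I t`, the total mass of types choosing `i` at `t` equals
`ρ_{i|t}`. -/
def Rationalizes {T : ℕ} {I : Fin T → Type*} [∀ t, Fintype (I t)]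
    (A : Finset (∀ t, I t)) (ρ : ∀ t, I t → ℝ) (ν : (∀ t, I t) → ℝ) : Prop :=
  (∀ a ∈ A, 0 ≤ ν a) ∧ (∑ a ∈ A, ν a = 1) ∧
  ∀ (t : Fin T) (i : I t), (∑ a ∈ A.filter fun a => a t = i, ν a) = ρ t i

section Aux

set_option linter.unusedSectionVars false

variable {T : ℕ} {I : Fin T → Type*} [∀ t, Fintype (I t)]

/-- The indicator vector of a type. -/
def deltaVec (a : ∀ t, I t) : ((t : Fin T) × I t) → ℝ :=
  fun p => if a p.1 = p.2 then 1 else 0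

lemma deltaVec_injective : Function.Injective (deltaVec (I := I)) := by
  intro a b hab
  funext t
  by_contra hne
  have h := congrFun hab ⟨t, a t⟩
  simp only [deltaVec] at h
  rw [if_neg (show ¬(b t = a t) from fun hba => hne hba.symm)] at h
  simp at h

end Aux

/-- a stochastic choice function is rationalizable over the set
of types `A` if and only if it satisfies the Weak Axiom of Revealed Stochastic
Preference with respect to `A`: for every multiplicity assignment `m`,
`Σ_t Σ_i m(t,i)·ρ_{i|t} ≤ max_{a∈A} Σ_t m(t, a(t))`. -/
theorem rationalizable_iff_warsp
    {T : ℕ} (hT : 1 ≤ T) {I : Fin T → Type*}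
    [∀ t, Fintype (I t)] [∀ t, Nonempty (I t)]
    (A : Finset (∀ t, I t)) (hA : A.Nonempty)
    (ρ : ∀ t, I t → ℝ) (hρ : StochasticChoice ρ) :
    (∃ ν : (∀ t, I t) → ℝ, Rationalizes A ρ ν) ↔
      ∀ m : (t : Fin T) → I t → ℕ,
        (∑ t, ∑ i, (m t i : ℝ) * ρ t i) ≤
          A.sup' hA (fun a => ∑ t, (m t (a t) : ℝ)) := by
  obtain ⟨hρ0, hρ1⟩ := hρ
  constructor
  · rintro ⟨ν, hν0, hν1, hνm⟩ m
    have key : (∑ t, ∑ i, (m t i : ℝ) * ρ t i)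
        = ∑ a ∈ A, ν a * ∑ t, (m t (a t) : ℝ) := by
      calc ∑ t, ∑ i, (m t i : ℝ) * ρ t i
          = ∑ t, ∑ i, (m t i : ℝ) * ∑ a ∈ A.filter fun a => a t = i, ν a := by
            simp_rw [hνm]
        _ = ∑ t, ∑ i, ∑ a ∈ A.filter fun a => a t = i, (m t i : ℝ) * ν a := by
            simp_rw [Finset.mul_sum]
        _ = ∑ t, ∑ i, ∑ a ∈ A, if a t = i then (m t (a t) : ℝ) * ν a else 0 := by
            refine Finset.sum_congr rfl fun t _ => Finset.sum_congr rfl fun i _ => ?_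
            rw [Finset.sum_filter]
            refine Finset.sum_congr rfl fun a _ => ?_
            split_ifs with h
            · rw [h]
            · rfl
        _ = ∑ t, ∑ a ∈ A, ∑ i, if a t = i then (m t (a t) : ℝ) * ν a else 0 := by
            refine Finset.sum_congr rfl fun t _ => Finset.sum_comm
        _ = ∑ t, ∑ a ∈ A, (m t (a t) : ℝ) * ν a := by
            refine Finset.sum_congr rfl fun t _ => Finset.sum_congr rfl fun a _ => ?_
            rw [Finset.sum_ite_eq Finset.univ (a t)]
            simp
        _ = ∑ a ∈ A, ∑ t, (m t (a t) : ℝ) * ν a := Finset.sum_comm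
        _ = ∑ a ∈ A, ν a * ∑ t, (m t (a t) : ℝ) := by
            refine Finset.sum_congr rfl fun a _ => ?_
            rw [Finset.mul_sum]
            exact Finset.sum_congr rfl fun t _ => mul_comm _ _
    rw [key]
    calc ∑ a ∈ A, ν a * ∑ t, (m t (a t) : ℝ)
        ≤ ∑ a ∈ A, ν a * A.sup' hA (fun a => ∑ t, (m t (a t) : ℝ)) := by
          refine Finset.sum_le_sum fun a ha => ?_
          exact mul_le_mul_of_nonneg_left
            (Finset.le_sup' (fun a => ∑ t, (m t (a t) : ℝ)) ha) (hν0 a ha)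
      _ = A.sup' hA (fun a => ∑ t, (m t (a t) : ℝ)) := by
          rw [← Finset.sum_mul, hν1, one_mul]
  · intro hwarsp
    set ρvec : ((t : Fin T) × I t) → ℝ := fun p => ρ p.1 p.2 with hρvec
    set S : Finset (((t : Fin T) × I t) → ℝ) := A.image deltaVec with hS
    have hmem : ρvec ∈ convexHull ℝ (S : Set (((t : Fin T) × I t) → ℝ)) := by
      by_contra hnot
      have hclosed : IsClosed (convexHull ℝ (S : Set (((t : Fin T) × I t) → ℝ))) :=
        (S.finite_toSet).isClosed_convexHull (𝕜 := ℝ)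
      obtain ⟨f, u, hfu, huρ⟩ := geometric_hahn_banach_closed_point
        (convex_convexHull ℝ _) hclosed hnot
      set lam : ((t : Fin T) × I t) → ℝ :=
        fun p => f (Pi.single p (1 : ℝ)) with hlam
      have hf_eval : ∀ y : ((t : Fin T) × I t) → ℝ, f y = ∑ p, y p * lam p := by
        intro y
        have hy : ∑ p, Pi.single p (y p) = y := Finset.univ_sum_single y
        calc f y = f (∑ p, Pi.single p (y p)) := by rw [hy]
          _ = ∑ p, f (Pi.single p (y p)) := map_sum f _ _
          _ = ∑ p, y p * lam p := by
              refine Finset.sum_congr rfl fun p _ => ?_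
              have h1 : Pi.single p (y p)
                  = y p • (Pi.single p (1 : ℝ) : ((t : Fin T) × I t) → ℝ) := by
                rw [← Pi.single_smul, smul_eq_mul, mul_one]
              rw [h1, map_smul, smul_eq_mul, hlam]
      have hfρ : f ρvec = ∑ t, ∑ i, ρ t i * lam ⟨t, i⟩ := by
        rw [hf_eval, ← Finset.univ_sigma_univ, Finset.sum_sigma]
      have hfδ : ∀ a : ∀ t, I t, f (deltaVec a) = ∑ t, lam ⟨t, a t⟩ := by
        intro a
        rw [hf_eval, ← Finset.univ_sigma_univ, Finset.sum_sigma]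
        refine Finset.sum_congr rfl fun t _ => ?_
        have h1 : ∀ i : I t, deltaVec a ⟨t, i⟩ * lam ⟨t, i⟩
            = if a t = i then lam ⟨t, a t⟩ else 0 := by
          intro i
          simp only [deltaVec]
          split_ifs with h
          · subst h; rw [one_mul]
          · rw [zero_mul]
        calc ∑ i, deltaVec a ⟨t, i⟩ * lam ⟨t, i⟩
            = ∑ i, if a t = i then lam ⟨t, a t⟩ else 0 :=
              Finset.sum_congr rfl fun i _ => h1 i
          _ = lam ⟨t, a t⟩ := by rw [Finset.sum_ite_eq Finset.univ (a t)]; simp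
      set C : ℝ := ∑ p, |lam p| with hC
      have hlam1 : ∀ p, 0 ≤ lam p + C := by
        intro p
        have h1 : |lam p| ≤ C :=
          Finset.single_le_sum (f := fun p => |lam p|)
            (fun q _ => abs_nonneg _) (Finset.mem_univ p)
        have h2 := neg_abs_le (lam p)
        linarith
      have hgap : ∀ a ∈ A, f (deltaVec a) < u := by
        intro a ha
        refine hfu _ (subset_convexHull ℝ _ ?_)
        exact Finset.mem_coe.2 (Finset.mem_image_of_mem _ ha)
      set ε : ℝ := f ρvec - u with hε
      have hεpos : 0 < ε := by simp only [hε]; linarith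
      obtain ⟨N, hN⟩ := exists_nat_gt ((T : ℝ) / ε)
      have hNε : (T : ℝ) < N * ε := by
        rw [div_lt_iff₀ hεpos] at hN
        linarith
      set m : (t : Fin T) → I t → ℕ :=
        fun t i => ⌈(N : ℝ) * (lam ⟨t, i⟩ + C)⌉₊ with hm
      have hmlb : ∀ t i, (N : ℝ) * (lam ⟨t, i⟩ + C) ≤ (m t i : ℝ) :=
        fun t i => Nat.le_ceil _
      have hmub : ∀ t i, (m t i : ℝ) < (N : ℝ) * (lam ⟨t, i⟩ + C) + 1 := fun t i =>
        Nat.ceil_lt_add_one (mul_nonneg (Nat.cast_nonneg N) (hlam1 _))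
      have hsum_shift : ∑ t, ∑ i, (lam ⟨t, i⟩ + C) * ρ t i = f ρvec + C * T := by
        have h1 : ∀ t : Fin T, ∑ i, (lam ⟨t, i⟩ + C) * ρ t i
            = (∑ i, ρ t i * lam ⟨t, i⟩) + C := by
          intro t
          conv_rhs => rw [← mul_one C, ← hρ1 t]
          rw [Finset.mul_sum, ← Finset.sum_add_distrib]
          exact Finset.sum_congr rfl fun i _ => by ring
        simp_rw [h1, Finset.sum_add_distrib, hfρ]
        simp [mul_comm]
      have hLHS : (N : ℝ) * (f ρvec + C * T) ≤ ∑ t, ∑ i, (m t i : ℝ) * ρ t i := by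
        rw [← hsum_shift, Finset.mul_sum]
        refine Finset.sum_le_sum fun t _ => ?_
        rw [Finset.mul_sum]
        refine Finset.sum_le_sum fun i _ => ?_
        rw [← mul_assoc]
        exact mul_le_mul_of_nonneg_right (hmlb t i) (hρ0 t i)
      have hRHS : ∀ a ∈ A, (∑ t, (m t (a t) : ℝ)) < (N : ℝ) * (f ρvec + C * T) := by
        intro a ha
        have h1 : (∑ t, (m t (a t) : ℝ))
            < ∑ t : Fin T, ((N : ℝ) * (lam ⟨t, a t⟩ + C) + 1) := by
          have hTpos : (Finset.univ : Finset (Fin T)).Nonempty :=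
            ⟨⟨0, hT⟩, Finset.mem_univ _⟩
          exact Finset.sum_lt_sum_of_nonempty hTpos fun t _ => hmub t (a t)
        have h2 : ∑ t : Fin T, ((N : ℝ) * (lam ⟨t, a t⟩ + C) + 1)
            = (N : ℝ) * (f (deltaVec a) + C * T) + T := by
          rw [hfδ a]
          have hs : ∑ t : Fin T, ((N : ℝ) * (lam ⟨t, a t⟩ + C))
              = (N : ℝ) * (∑ t, lam ⟨t, a t⟩) + (N : ℝ) * C * T := by
            rw [← Finset.mul_sum, Finset.sum_add_distrib, Finset.sum_const,
              Finset.card_univ, Fintype.card_fin, nsmul_eq_mul]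
            ring
          rw [Finset.sum_add_distrib, hs, Finset.sum_const, Finset.card_univ,
            Fintype.card_fin, nsmul_eq_mul, mul_one]
          ring
        have h3 : f (deltaVec a) < u := hgap a ha
        have h4 : (N : ℝ) * (f (deltaVec a) + C * T) + T
            < (N : ℝ) * (f ρvec + C * T) := by
          have hN0 : (0 : ℝ) ≤ N := Nat.cast_nonneg N
          have h5 : f (deltaVec a) ≤ f ρvec - ε := by simp only [hε]; linarith
          nlinarith
        linarith
      have hw := hwarsp m
      obtain ⟨a₀, ha₀, hsup⟩ :=
        Finset.exists_mem_eq_sup' hA (fun a => ∑ t, (m t (a t) : ℝ))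
      rw [hsup] at hw
      have h6 := hRHS a₀ ha₀
      linarith
    rw [Finset.mem_convexHull'] at hmem
    obtain ⟨w, hw0, hw1, hwsum⟩ := hmem
    refine ⟨fun a => w (deltaVec a), ?_, ?_, ?_⟩
    · intro a ha
      exact hw0 _ (Finset.mem_image_of_mem _ ha)
    · rw [← hw1, hS]
      exact (Finset.sum_image (fun a _ b _ h => deltaVec_injective h)).symm
    · intro t i
      have hcoord := congrFun hwsum ⟨t, i⟩
      rw [Finset.sum_apply] at hcoord
      have h7 : ∑ y ∈ S, (w y • y) ⟨t, i⟩ = ∑ y ∈ S, w y * y ⟨t, i⟩ :=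
        Finset.sum_congr rfl fun y _ => rfl
      rw [h7, hS, Finset.sum_image (fun a _ b _ h => deltaVec_injective h)] at hcoord
      have hcoord' : ∑ a ∈ A, w (deltaVec a) * (if a t = i then (1:ℝ) else 0)
          = ρ t i := hcoord
      rw [← hcoord', Finset.sum_filter]
      refine Finset.sum_congr rfl fun a _ => ?_
      split_ifs with h
      · rw [mul_one]
      · rw [mul_zero]
end
end

section
/- Fix T ≥ 1, nonempty finite patch sets I_1,…,I_T, a nonempty finite set A of types, and a stochastic choice function ρ = (ρ_{i|t}). Then the following are equivalent: (i) there exists ν that rationalizes ρ over A; (ii) for every family r of real numbers r(t,i) ∈ [0,1] (for t ∈ {1,…,T}, i ∈ I_t) and every real c ≥ 0 such that Σ_{t=1}^T r(t, a(t)) ≤ c for all a ∈ A, one has Σ_{t=1}^T Σ_{i∈I_t} r(t,i)·ρ_{i|t} ≤ c. -/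
open scoped BigOperators Classical

noncomputable section

/-- a stochastic choice function is rationalizable over the set
of types `A` if and only if for every `[0,1]`-valued family `r(t,i)` and every
`c ≥ 0` such that `Σ_t r(t, a(t)) ≤ c` for all types `a ∈ A`, one has
`Σ_t Σ_i r(t,i)·ρ_{i|t} ≤ c`. -/
theorem rationalizable_iff_dual_inequalities
    {T : ℕ} (hT : 1 ≤ T) {I : Fin T → Type*}
    [∀ t, Fintype (I t)] [∀ t, Nonempty (I t)]
    (A : Finset (∀ t, I t)) (hA : A.Nonempty)
    (ρ : ∀ t, I t → ℝ) (hρ : StochasticChoice ρ) :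
    (∃ ν : (∀ t, I t) → ℝ, Rationalizes A ρ ν) ↔
      ∀ (r : (t : Fin T) → I t → ℝ) (c : ℝ),
        (∀ t i, r t i ∈ Set.Icc (0 : ℝ) 1) → 0 ≤ c →
        (∀ a ∈ A, (∑ t, r t (a t)) ≤ c) →
        (∑ t, ∑ i, r t i * ρ t i) ≤ c := by
  classical
  haveI : Nonempty (Fin T) := ⟨⟨0, hT⟩⟩
  obtain ⟨hρ0, hρ1⟩ := hρ
  constructor
  · rintro ⟨ν, hν0, hν1, hνρ⟩ r c hr hc hrc
    have key : ∀ t : Fin T, ∑ i, r t i * ρ t i = ∑ a ∈ A, r t (a t) * ν a := by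
      intro t
      rw [← Finset.sum_fiberwise_of_maps_to (g := fun a => a t)
        (fun a _ => Finset.mem_univ (a t)) (fun a => r t (a t) * ν a)]
      refine Finset.sum_congr rfl fun i _ => ?_
      rw [← hνρ t i, Finset.mul_sum]
      refine Finset.sum_congr rfl fun a ha => ?_
      rw [(Finset.mem_filter.mp ha).2]
    calc ∑ t, ∑ i, r t i * ρ t i = ∑ a ∈ A, (∑ t, r t (a t)) * ν a := by
          simp_rw [key]; rw [Finset.sum_comm]; simp_rw [Finset.sum_mul]
      _ ≤ ∑ a ∈ A, c * ν a :=
          Finset.sum_le_sum fun a ha => mul_le_mul_of_nonneg_right (hrc a ha) (hν0 a ha)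
      _ = c := by rw [← Finset.mul_sum, hν1, mul_one]
  · intro hdual
    by_contra hno
    set vec : (∀ t, I t) → ((Σ t, I t) → ℝ) :=
      fun a j => if a j.1 = j.2 then 1 else 0 with hvecdef
    set x : (Σ t, I t) → ℝ := fun j => ρ j.1 j.2 with hxdef
    have vec_inj : Function.Injective vec := by
      intro a b hab
      funext t
      have h := congrFun hab ⟨t, a t⟩
      simp only [hvecdef, if_pos rfl] at h
      by_contra hne
      rw [if_neg (fun hh => hne hh.symm)] at h
      norm_num at h
    have hmem : x ∉ convexHull ℝ (vec '' ↑A) := by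
      intro hxmem
      apply hno
      rw [← Finset.coe_image, Finset.convexHull_eq] at hxmem
      obtain ⟨w, hw0, hw1, hwx⟩ := hxmem
      rw [Finset.centerMass_eq_of_sum_1 _ id hw1] at hwx
      have hinj : ∀ a ∈ A, ∀ b ∈ A, vec a = vec b → a = b := fun a _ b _ h => vec_inj h
      refine ⟨fun a => w (vec a), fun a ha => hw0 _ (Finset.mem_image_of_mem _ ha), ?_, ?_⟩
      · rw [← Finset.sum_image hinj, hw1]
      · intro t i
        have hx2 : ∑ a ∈ A, w (vec a) • vec a = x := by
          rw [← hwx, Finset.sum_image hinj]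
          rfl
        have := congrFun hx2 ⟨t, i⟩
        simp only [Finset.sum_apply, Pi.smul_apply, hvecdef, smul_eq_mul, mul_ite, mul_one,
          mul_zero] at this
        rw [Finset.sum_filter]
        exact this
    obtain ⟨f, u, hfu, huf⟩ := geometric_hahn_banach_closed_point
      (convex_convexHull ℝ _) (((A.finite_toSet.image vec).isCompact_convexHull ℝ).isClosed) hmem
    set r0 : ∀ t : Fin T, I t → ℝ := fun t i => f (Pi.single (⟨t, i⟩ : Σ t, I t) 1) with hr0def
    have fsum : ∀ y : (Σ t, I t) → ℝ, f y = ∑ j : Σ t, I t, y j * r0 j.1 j.2 := by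
      intro y
      have hy : y = ∑ j : Σ t, I t, y j • (Pi.single j 1 : (Σ t, I t) → ℝ) := by
        funext k
        simp [Finset.sum_apply, Pi.single_apply, mul_ite, Finset.sum_ite_eq]
      conv_lhs => rw [hy]
      rw [map_sum]
      simp [hr0def, map_smul, smul_eq_mul]
    have fvec : ∀ a : (∀ t, I t), f (vec a) = ∑ t, r0 t (a t) := by
      intro a
      rw [fsum, ← Finset.univ_sigma_univ, Finset.sum_sigma]
      refine Finset.sum_congr rfl fun t _ => ?_
      simp [hvecdef, ite_mul, Finset.sum_ite_eq]
    have fx : f x = ∑ t, ∑ i, ρ t i * r0 t i := by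
      rw [fsum, ← Finset.univ_sigma_univ, Finset.sum_sigma]
    have hIne : ∀ t : Fin T, (Finset.univ : Finset (I t)).Nonempty :=
      fun t => Finset.univ_nonempty
    set m : Fin T → ℝ := fun t => Finset.univ.inf' (hIne t) (r0 t) with hmdef
    haveI : Nonempty (Σ t, I t) := ⟨⟨⟨0, hT⟩, Classical.arbitrary _⟩⟩
    set M : ℝ := Finset.univ.sup' Finset.univ_nonempty
      (fun j : Σ t, I t => r0 j.1 j.2 - m j.1) with hMdef
    have hm_le : ∀ t i, m t ≤ r0 t i := fun t i => Finset.inf'_le _ (Finset.mem_univ i)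
    have hle_M : ∀ (t : Fin T) (i : I t), r0 t i - m t ≤ M :=
      fun t i => Finset.le_sup' (f := fun j : Σ t, I t => r0 j.1 j.2 - m j.1) (Finset.mem_univ (⟨t, i⟩ : Σ t, I t))
    obtain ⟨a₀, ha₀⟩ := hA
    have hvec_mem : ∀ a ∈ A, f (vec a) < u := fun a ha =>
      hfu (vec a) (subset_convexHull ℝ _ ⟨a, ha, rfl⟩)
    have hMpos : 0 < M := by
      by_contra h
      push_neg at h
      have hr0m : ∀ (t : Fin T) (i : I t), r0 t i = m t := fun t i =>
        le_antisymm (by linarith [hle_M t i]) (hm_le t i)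
      have h1 : f (vec a₀) = ∑ t, m t := by
        rw [fvec]; exact Finset.sum_congr rfl fun t _ => hr0m t (a₀ t)
      have h2 : f x = ∑ t, m t := by
        rw [fx]
        refine Finset.sum_congr rfl fun t _ => ?_
        simp_rw [hr0m]
        rw [← Finset.sum_mul, hρ1, one_mul]
      have := hvec_mem a₀ ha₀
      linarith
    set r : ∀ t : Fin T, I t → ℝ := fun t i => (r0 t i - m t) / M with hrdef
    set c : ℝ := (u - ∑ t, m t) / M with hcdef
    have hr01 : ∀ (t : Fin T) (i : I t), r t i ∈ Set.Icc (0 : ℝ) 1 := by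
      intro t i
      constructor
      · exact div_nonneg (sub_nonneg.2 (hm_le t i)) hMpos.le
      · rw [div_le_one hMpos]; exact hle_M t i
    have hsumr : ∀ a : (∀ t, I t), ∑ t, r t (a t) = (f (vec a) - ∑ t, m t) / M := by
      intro a
      rw [fvec, ← Finset.sum_div, Finset.sum_sub_distrib]
    have hac : ∀ a ∈ A, ∑ t, r t (a t) ≤ c := by
      intro a ha
      rw [hsumr, hcdef]
      have := hvec_mem a ha
      gcongr
    have hc0 : 0 ≤ c :=
      le_trans (Finset.sum_nonneg fun t _ => (hr01 t (a₀ t)).1) (hac a₀ ha₀)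
    have hfinal := hdual r c hr01 hc0 hac
    have hLHS : ∑ t, ∑ i, r t i * ρ t i = (f x - ∑ t, m t) / M := by
      have hpt : ∀ t : Fin T, ∑ i, r t i * ρ t i = ((∑ i, ρ t i * r0 t i) - m t) / M := by
        intro t
        have hterm : ∀ i : I t, r t i * ρ t i = (ρ t i * r0 t i - m t * ρ t i) / M := by
          intro i
          simp only [hrdef]
          ring
        simp_rw [hterm]
        rw [← Finset.sum_div, Finset.sum_sub_distrib, ← Finset.mul_sum, hρ1, mul_one]
      simp_rw [hpt]
      rw [← Finset.sum_div, Finset.sum_sub_distrib, fx]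
    rw [hLHS, hcdef] at hfinal
    have hle : f x - ∑ t, m t ≤ u - ∑ t, m t := by
      have := mul_le_mul_of_nonneg_right hfinal hMpos.le
      rwa [div_mul_cancel₀ _ hMpos.ne', div_mul_cancel₀ _ hMpos.ne'] at this
    linarith
end
end
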